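/- Let $u_1, u_2 \in \mathbb{R}^3$ with $u_1 \ne u_2$, and suppose $m_1, \nu_{12}, n_1, n_2, \lambda_u > 0$, $\delta = 1 - \frac{\lambda_u}{m_1 \nu_{12} n_1 n_2} < 1$. Suppose $U: \mathbb{R}^3 \times \mathbb{R}^3 \to \mathbb{R}^3$ and $\gamma \in \mathbb{R}$ satisfy the energy-exchange matching identity $\left[\tfrac{1}{2}\nu_{12} n_1 n_2 m_1(\delta - 1)(u_1 + u_2 + \delta(u_1 - u_2)) + \tfrac{3}{2}\nu_{12} n_1 n_2 \gamma (u_1 - u_2) + \lambda_u U(u_1, u_2)\right] \cdot (u_1 - u_2) = 0$, with $\gamma$ a constant independent of $u_1, u_2$. Then the component of $U$ parallel to $u_1 - u_2$ is $\left(\frac{1}{2}\frac{(u_1+u_2)\cdot(u_1-u_2)}{|u_1-u_2|^2} - c\right)(u_1 - u_2)$ for some constant $c \in \mathbb{R}$, and $\gamma = \frac{1}{3} m_1 (1-\delta)\delta + \frac{2}{3} m_1 (1-\delta) c$. -/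

import Mathlib

/-- Theorem 5.2: matching the BGK energy exchange with Dellacherie's term determines
the component of `U` parallel to `u₁-u₂` and fixes `γ` in terms of a constant `c`. -/
theorem stmt_12 (m1 ν12 n1 n2 lu γ δ : ℝ)
    (hm1 : 0 < m1) (hν : 0 < ν12) (hn1 : 0 < n1) (hn2 : 0 < n2) (hlu : 0 < lu)
    (hδ : δ = 1 - lu / (m1 * ν12 * n1 * n2)) (hδ1 : δ < 1)
    (U : EuclideanSpace ℝ (Fin 3) → EuclideanSpace ℝ (Fin 3) → EuclideanSpace ℝ (Fin 3))
    (hmatch : ∀ u1 u2 : EuclideanSpace ℝ (Fin 3), u1 ≠ u2 →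
      (inner ℝ ((1 / 2 * ν12 * n1 * n2 * m1 * (δ - 1)) • (u1 + u2 + δ • (u1 - u2))
          + (3 / 2 * ν12 * n1 * n2 * γ) • (u1 - u2) + lu • U u1 u2) (u1 - u2) : ℝ) = 0) :
    ∃ c : ℝ, γ = 1 / 3 * m1 * (1 - δ) * δ + 2 / 3 * m1 * (1 - δ) * c ∧
      ∀ u1 u2 : EuclideanSpace ℝ (Fin 3), u1 ≠ u2 →
        ((inner ℝ (U u1 u2) (u1 - u2) : ℝ) / ‖u1 - u2‖ ^ 2) • (u1 - u2)
          = (1 / 2 * ((inner ℝ (u1 + u2) (u1 - u2) : ℝ) / ‖u1 - u2‖ ^ 2) - c) • (u1 - u2) := by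
  have hK : (0:ℝ) < m1 * ν12 * n1 * n2 := by positivity
  have h1δ : 0 < 1 - δ := by linarith
  have hlu' : lu = m1 * ν12 * n1 * n2 * (1 - δ) := by
    rw [hδ]; field_simp; ring
  set c : ℝ := (3 * γ - m1 * (1 - δ) * δ) / (2 * m1 * (1 - δ)) with hc
  have hm1δ : m1 * (1 - δ) ≠ 0 := by positivity
  have hcc : 2 * m1 * (1 - δ) * c = 3 * γ - m1 * (1 - δ) * δ := by
    rw [hc]; field_simp
  refine ⟨c, by field_simp; linarith, ?_⟩
  intro u1 u2 hne
  have h := hmatch u1 u2 hne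
  set d := u1 - u2 with hd
  have hdne : d ≠ 0 := sub_ne_zero.mpr hne
  have hD : ‖d‖ ^ 2 ≠ 0 := pow_ne_zero 2 (norm_ne_zero_iff.mpr hdne)
  simp only [inner_add_left, real_inner_smul_left, real_inner_self_eq_norm_sq] at h
  set X : ℝ := inner ℝ (U u1 u2) d with hX
  set A : ℝ := inner ℝ (u1 + u2) d with hA
  have key : X = 1 / 2 * A - c * ‖d‖ ^ 2 := by
    have hA2 : (inner ℝ u1 d + inner ℝ u2 d : ℝ) = A := by rw [hA, inner_add_left]
    rw [hlu'] at h
    have hKδ : m1 * ν12 * n1 * n2 * (1 - δ) ≠ 0 := by positivity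
    have key2 : m1 * ν12 * n1 * n2 * (1 - δ) * X
        = m1 * ν12 * n1 * n2 * (1 - δ) * (1 / 2 * A - c * ‖d‖ ^ 2) := by
      linear_combination h + (ν12 * n1 * n2 * ‖d‖ ^ 2 / 2) * hcc
        + (1 / 2 * ν12 * n1 * n2 * m1 * (δ - 1) + m1 * ν12 * n1 * n2 * (1 - δ)) * hA2
    exact mul_left_cancel₀ hKδ key2
  rw [key]
  congr 1
  field_simp
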